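/- Let V be a complex Hilbert space, Ω ⊆ ℂ open, h : Ω → End(V) a C² map into self-adjoint operators, and H : Ω → GL(V) holomorphic. Then for every v ∈ V, the Wirtinger derivative ∂²/∂z∂z̄ of the scalar function z ↦ ⟨H(z)*h(z)H(z) v, v⟩ equals ⟨H(z)* (𝓛h)(z) H(z) v, v⟩, where 𝓛h = h_{z z̄} − P_{z̄}P⁻¹h_z − h_{z̄}P⁻¹P_z + P_{z̄}P⁻¹ h P⁻¹ P_z and P = (H H*)⁻¹ (so that H*PH = 1). -/

import Mathlib

open Complex ContinuousLinearMap

noncomputable def wder {E : Type*} [NormedAddCommGroup E] [NormedSpace ℂ E]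
    (f : ℂ → E) (z : ℂ) : E :=
  (2 : ℂ)⁻¹ • (fderiv ℝ f z 1 - Complex.I • fderiv ℝ f z Complex.I)

noncomputable def wderBar {E : Type*} [NormedAddCommGroup E] [NormedSpace ℂ E]
    (f : ℂ → E) (z : ℂ) : E :=
  (2 : ℂ)⁻¹ • (fderiv ℝ f z 1 + Complex.I • fderiv ℝ f z Complex.I)

section basic

variable {E F : Type*} [NormedAddCommGroup E] [NormedSpace ℂ E]
  [NormedAddCommGroup F] [NormedSpace ℂ F] {z : ℂ}

theorem half_smul (x : E) : (2:ℂ)⁻¹ • x = (2:ℝ)⁻¹ • x := by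
  have : ((algebraMap ℝ ℂ) (2:ℝ)⁻¹) • x = (2:ℝ)⁻¹ • x := algebraMap_smul ℂ _ x
  rw [← this]
  norm_num

theorem wder_congr {f g : ℂ → E} (h : f =ᶠ[nhds z] g) : wder f z = wder g z := by
  simp only [wder, h.fderiv_eq]

theorem wderBar_congr {f g : ℂ → E} (h : f =ᶠ[nhds z] g) : wderBar f z = wderBar g z := by
  simp only [wderBar, h.fderiv_eq]

theorem wder_of_holo {f : ℂ → E} (hf : DifferentiableAt ℂ f z) :
    wder f z = deriv f z ∧ wderBar f z = 0 := by
  have h1 : fderiv ℝ f z = (fderiv ℂ f z).restrictScalars ℝ :=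
    (hf.hasFDerivAt.restrictScalars ℝ).fderiv
  have hI : fderiv ℂ f z Complex.I = Complex.I • fderiv ℂ f z 1 := by
    rw [← (fderiv ℂ f z).map_smul, smul_eq_mul, mul_one]
  have hd : deriv f z = fderiv ℂ f z 1 := rfl
  constructor
  · rw [wder, h1, hd]
    simp only [ContinuousLinearMap.coe_restrictScalars', Function.comp_apply]
    rw [hI, smul_smul, Complex.I_mul_I]
    simp only [neg_one_smul, sub_neg_eq_add, smul_add]
    rw [← add_smul]
    norm_num
  · rw [wderBar, h1]
    simp only [ContinuousLinearMap.coe_restrictScalars', Function.comp_apply]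
    rw [hI, smul_smul, Complex.I_mul_I]
    simp [neg_one_smul]

end basic

section comp

variable {E F : Type*} [NormedAddCommGroup E] [NormedSpace ℂ E]
  [NormedAddCommGroup F] [NormedSpace ℂ F] {z : ℂ}

theorem wder_comp_conj (L : E →L[ℝ] F) (hL : ∀ x : E, L (Complex.I • x) = -(Complex.I • L x))
    {f : ℂ → E} (hf : DifferentiableAt ℝ f z) :
    wder (fun w => L (f w)) z = L (wderBar f z) ∧
      wderBar (fun w => L (f w)) z = L (wder f z) := by
  have h1 : fderiv ℝ (fun w => L (f w)) z = L.comp (fderiv ℝ f z) :=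
    (L.hasFDerivAt.comp z hf.hasFDerivAt).fderiv
  constructor
  · rw [wder, wderBar, h1, half_smul, half_smul, L.map_smul]
    simp only [ContinuousLinearMap.coe_comp', Function.comp_apply, map_add, hL]
    abel_nf
  · rw [wder, wderBar, h1, half_smul, half_smul, L.map_smul]
    simp only [ContinuousLinearMap.coe_comp', Function.comp_apply, map_sub, hL]
    abel_nf

end comp

section mul

variable {A : Type*} [NormedRing A] [NormedAlgebra ℂ A] {z : ℂ}

theorem wder_mul {a b : ℂ → A} (ha : DifferentiableAt ℝ a z) (hb : DifferentiableAt ℝ b z) :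
    wder (fun w => a w * b w) z = wder a z * b z + a z * wder b z ∧
      wderBar (fun w => a w * b w) z = wderBar a z * b z + a z * wderBar b z := by
  have h1 : fderiv ℝ (fun w => a w * b w) z
      = a z • fderiv ℝ b z + (fderiv ℝ a z).smulRight (b z) :=
    (ha.hasFDerivAt.mul' hb.hasFDerivAt).fderiv
  have h2 : ∀ t, fderiv ℝ (fun w => a w * b w) z t
      = a z * fderiv ℝ b z t + fderiv ℝ a z t * b z := by
    intro t
    rw [h1]
    simp [smul_eq_mul]
  constructor
  · rw [wder, wder, wder, h2, h2]
    simp only [smul_add, smul_sub, smul_mul_assoc, mul_smul_comm, sub_mul, add_mul, mul_add,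
      mul_sub]
    abel
  · rw [wderBar, wderBar, wderBar, h2, h2]
    simp only [smul_add, smul_sub, smul_mul_assoc, mul_smul_comm, sub_mul, add_mul, mul_add,
      mul_sub]
    abel

theorem wder_add {a b : ℂ → A} (ha : DifferentiableAt ℝ a z) (hb : DifferentiableAt ℝ b z) :
    wder (fun w => a w + b w) z = wder a z + wder b z ∧
      wderBar (fun w => a w + b w) z = wderBar a z + wderBar b z := by
  have h1 : fderiv ℝ (fun w => a w + b w) z = fderiv ℝ a z + fderiv ℝ b z :=
    (ha.hasFDerivAt.add hb.hasFDerivAt).fderiv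
  constructor
  · rw [wder, wder, wder, h1]
    simp only [ContinuousLinearMap.add_apply, smul_add, smul_sub]
    abel
  · rw [wderBar, wderBar, wderBar, h1]
    simp only [ContinuousLinearMap.add_apply, smul_add, smul_sub]
    abel

theorem wder_ring_inverse [CompleteSpace A] {Q : ℂ → A}
    (hQ : DifferentiableAt ℝ Q z) (hu : IsUnit (Q z)) :
    wder (fun w => Ring.inverse (Q w)) z
        = -(Ring.inverse (Q z) * wder Q z * Ring.inverse (Q z)) ∧
      wderBar (fun w => Ring.inverse (Q w)) z
        = -(Ring.inverse (Q z) * wderBar Q z * Ring.inverse (Q z)) := by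
  obtain ⟨u, hu⟩ := hu
  have hinv : HasFDerivAt (Ring.inverse : A → A)
      (-mulLeftRight ℝ A ↑u⁻¹ ↑u⁻¹) (Q z) := by
    rw [← hu]; exact hasFDerivAt_ringInverse u
  have h1 : fderiv ℝ (fun w => Ring.inverse (Q w)) z
      = (-mulLeftRight ℝ A ↑u⁻¹ ↑u⁻¹).comp (fderiv ℝ Q z) :=
    (hinv.comp z hQ.hasFDerivAt).fderiv
  have h2 : ∀ t, fderiv ℝ (fun w => Ring.inverse (Q w)) z t
      = -((u⁻¹ : Aˣ) * fderiv ℝ Q z t * (u⁻¹ : Aˣ)) := by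
    intro t
    rw [h1]
    simp [mulLeftRight_apply]
  have hri : (Ring.inverse (Q z) : A) = ((u⁻¹ : Aˣ) : A) := by
    rw [← hu, Ring.inverse_unit]
  constructor
  · rw [wder, wder, h2, h2, hri]
    simp only [smul_neg, smul_sub, smul_mul_assoc, mul_smul_comm, neg_sub_neg, mul_sub, sub_mul,
      neg_mul, mul_neg]
    try abel
  · rw [wderBar, wderBar, h2, h2, hri]
    simp only [smul_neg, smul_add, smul_mul_assoc, mul_smul_comm, mul_add, add_mul,
      neg_mul, mul_neg, neg_add]
    try abel

end mul

section second

variable {E : Type*} [NormedAddCommGroup E] [NormedSpace ℂ E] {z : ℂ}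

theorem differentiableAt_wder {h : ℂ → E} (hd : DifferentiableAt ℝ (fderiv ℝ h) z) :
    DifferentiableAt ℝ (wder h) z ∧ DifferentiableAt ℝ (wderBar h) z := by
  have h1 : DifferentiableAt ℝ (fun w => fderiv ℝ h w 1) z :=
    (ContinuousLinearMap.apply ℝ E (1:ℂ)).differentiableAt.comp z hd
  have hI : DifferentiableAt ℝ (fun w => fderiv ℝ h w Complex.I) z :=
    (ContinuousLinearMap.apply ℝ E Complex.I).differentiableAt.comp z hd
  constructor
  · exact ((h1.sub (hI.const_smul Complex.I)).const_smul ((2:ℂ)⁻¹) : _)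
  · exact ((h1.add (hI.const_smul Complex.I)).const_smul ((2:ℂ)⁻¹) : _)

theorem wder_wderBar_symm {h : ℂ → E} (hh : ContDiff ℝ 2 h) (z : ℂ) :
    wderBar (wder h) z = wder (wderBar h) z := by
  have hd1 : Differentiable ℝ h := hh.differentiable two_ne_zero
  have hd2 : Differentiable ℝ (fderiv ℝ h) :=
    (hh.fderiv_right (le_refl _)).differentiable one_ne_zero
  set D2 := fderiv ℝ (fderiv ℝ h) z with hD2
  have hsymm : D2 1 Complex.I = D2 Complex.I 1 :=
    second_derivative_symmetric (fun y => (hd1 y).hasFDerivAt) (hd2 z).hasFDerivAt 1 Complex.I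
  have hDh : HasFDerivAt (fderiv ℝ h) D2 z := (hd2 z).hasFDerivAt
  have h1 : HasFDerivAt (fun w => fderiv ℝ h w 1)
      ((ContinuousLinearMap.apply ℝ E (1:ℂ)).comp D2) z :=
    (ContinuousLinearMap.apply ℝ E (1:ℂ)).hasFDerivAt.comp z hDh
  have hIa : HasFDerivAt (fun w => fderiv ℝ h w Complex.I)
      ((ContinuousLinearMap.apply ℝ E Complex.I).comp D2) z :=
    (ContinuousLinearMap.apply ℝ E Complex.I).hasFDerivAt.comp z hDh
  have hw : HasFDerivAt (wder h)
      ((2:ℂ)⁻¹ • (((ContinuousLinearMap.apply ℝ E (1:ℂ)).comp D2)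
        - Complex.I • ((ContinuousLinearMap.apply ℝ E Complex.I).comp D2))) z :=
    (h1.sub (hIa.const_smul Complex.I)).const_smul ((2:ℂ)⁻¹)
  have hwb : HasFDerivAt (wderBar h)
      ((2:ℂ)⁻¹ • (((ContinuousLinearMap.apply ℝ E (1:ℂ)).comp D2)
        + Complex.I • ((ContinuousLinearMap.apply ℝ E Complex.I).comp D2))) z :=
    (h1.add (hIa.const_smul Complex.I)).const_smul ((2:ℂ)⁻¹)
  rw [wderBar, wder, hw.fderiv, hwb.fderiv]
  simp only [ContinuousLinearMap.smul_apply, ContinuousLinearMap.sub_apply,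
    ContinuousLinearMap.add_apply, ContinuousLinearMap.coe_comp', Function.comp_apply,
    ContinuousLinearMap.apply_apply]
  rw [hsymm]
  module

end second

section vspec

variable {V : Type*} [NormedAddCommGroup V] [InnerProductSpace ℂ V] [CompleteSpace V]

noncomputable def starR (V : Type*) [NormedAddCommGroup V] [InnerProductSpace ℂ V]
    [CompleteSpace V] : (V →L[ℂ] V) →L[ℝ] (V →L[ℂ] V) :=
  LinearMap.mkContinuous
    { toFun := fun T => star T
      map_add' := fun S T => star_add S T
      map_smul' := fun r T => by
        show star (r • T) = (RingHom.id ℝ) r • star T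
        rw [← algebraMap_smul ℂ r T, star_smul, RingHom.id_apply,
          ← algebraMap_smul ℂ r (star T)]
        congr 1
        simp [Complex.star_def, Complex.conj_ofReal] }
    1 (fun T => by simp [norm_star])

@[simp] theorem starR_apply (T : V →L[ℂ] V) : starR V T = star T := rfl

theorem starR_I (T : V →L[ℂ] V) : starR V (Complex.I • T) = -(Complex.I • starR V T) := by
  rw [starR_apply, starR_apply, star_smul, Complex.star_def, Complex.conj_I, neg_smul]

noncomputable def phiR (v : V) : (V →L[ℂ] V) →L[ℝ] ℂ :=
  LinearMap.mkContinuous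
    { toFun := fun T => (inner ℂ (T v) v : ℂ)
      map_add' := fun S T => by simp [inner_add_left]
      map_smul' := fun r T => by
        show (inner ℂ (((r • T) : V →L[ℂ] V) v) v : ℂ) = (RingHom.id ℝ) r • (inner ℂ (T v) v : ℂ)
        rw [ContinuousLinearMap.smul_apply, ← algebraMap_smul ℂ r (T v), inner_smul_left,
          RingHom.id_apply]
        simp [Complex.conj_ofReal, Complex.real_smul] }
    (‖v‖ * ‖v‖) (fun T => by
      calc ‖(inner ℂ (T v) v : ℂ)‖ ≤ ‖T v‖ * ‖v‖ := norm_inner_le_norm _ _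
        _ ≤ ‖T‖ * ‖v‖ * ‖v‖ := by gcongr; exact T.le_opNorm v
        _ = ‖v‖ * ‖v‖ * ‖T‖ := by ring)

@[simp] theorem phiR_apply (v : V) (T : V →L[ℂ] V) : phiR v T = (inner ℂ (T v) v : ℂ) := rfl

theorem phiR_I (v : V) (T : V →L[ℂ] V) : phiR v (Complex.I • T) = -(Complex.I • phiR v T) := by
  rw [phiR_apply, phiR_apply, ContinuousLinearMap.smul_apply, inner_smul_left]
  simp [Complex.conj_I]

end vspec
set_option maxHeartbeats 2000000 in
theorem stmt8
    {V : Type*} [NormedAddCommGroup V] [InnerProductSpace ℂ V] [CompleteSpace V]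
    (Ω : Set ℂ) (hΩ : IsOpen Ω)
    (h : ℂ → (V →L[ℂ] V)) (hh2 : ContDiff ℝ 2 h) (hhself : ∀ z, IsSelfAdjoint (h z))
    (H : ℂ → (V →L[ℂ] V)) (hH : DifferentiableOn ℂ H Ω)
    (hHinv : ∀ z ∈ Ω, IsUnit (H z))
    (P : ℂ → (V →L[ℂ] V))
    (hP : ∀ z, P z = Ring.inverse (H z * ContinuousLinearMap.adjoint (H z)))
    (Lh : ℂ → (V →L[ℂ] V))
    (hLh : ∀ z, Lh z =
      wder (wderBar h) z
        - wderBar P z * Ring.inverse (P z) * wder h z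
        - wderBar h z * Ring.inverse (P z) * wder P z
        + wderBar P z * Ring.inverse (P z) * h z * Ring.inverse (P z) * wder P z) :
    ∀ z ∈ Ω, ∀ v : V,
      wder (wderBar (fun w : ℂ =>
          (inner ℂ ((ContinuousLinearMap.adjoint (H w) * h w * H w) v) v : ℂ))) z
        = (inner ℂ ((ContinuousLinearMap.adjoint (H z) * Lh z * H z) v) v : ℂ) := by
  intro z hz v
  have hΩz : Ω ∈ nhds z := hΩ.mem_nhds hz
  have han : AnalyticOnNhd ℂ H Ω := hH.analyticOnNhd hΩ
  have hder : AnalyticOnNhd ℂ (deriv H) Ω := han.deriv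
  -- differentiability facts
  have hHc : ∀ w ∈ Ω, DifferentiableAt ℂ H w := fun w hw => (han w hw).differentiableAt
  have hHr : ∀ w ∈ Ω, DifferentiableAt ℝ H w := fun w hw => (hHc w hw).restrictScalars ℝ
  have hSr : ∀ w ∈ Ω, DifferentiableAt ℝ (fun u => star (H u)) w := fun w hw =>
    ((starR V).differentiableAt.comp w (hHr w hw) : _)
  have hhr : ∀ w, DifferentiableAt ℝ h w := fun w => (hh2.differentiable two_ne_zero) w
  have hfr : ∀ w ∈ Ω, DifferentiableAt ℝ (fun u => star (H u) * h u * H u) w := fun w hw =>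
    ((hSr w hw).mul (hhr w)).mul (hHr w hw)
  have hfd1 : ContDiff ℝ 1 (fderiv ℝ h) := hh2.fderiv_right (le_refl _)
  have hwhd : DifferentiableAt ℝ (wder h) z ∧ DifferentiableAt ℝ (wderBar h) z :=
    differentiableAt_wder ((hfd1.differentiable one_ne_zero) z)
  have hDr : DifferentiableAt ℝ (deriv H) z := ((hder z hz).differentiableAt).restrictScalars ℝ
  -- first order Wirtinger derivatives of H and star ∘ H
  have hwH : ∀ w ∈ Ω, wder H w = deriv H w ∧ wderBar H w = 0 := fun w hw =>
    wder_of_holo (hHc w hw)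
  have hwS : ∀ w ∈ Ω, wder (fun u => star (H u)) w = 0 ∧
      wderBar (fun u => star (H u)) w = star (deriv H w) := by
    intro w hw
    have h1 := wder_comp_conj (starR V) (starR_I (V := V)) (hHr w hw)
    have h1a := h1.1
    have h1b := h1.2
    rw [(hwH w hw).2] at h1a
    rw [(hwH w hw).1] at h1b
    constructor
    · simpa using h1a
    · simpa using h1b
  -- eventual formula for wder of f = star H * h * H
  have hGev : wder (fun u => star (H u) * h u * H u) =ᶠ[nhds z]
      (fun u => star (H u) * wder h u * H u + star (H u) * h u * deriv H u) := by
    filter_upwards [hΩz] with w hw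
    have e1 := (wder_mul ((hSr w hw).mul (hhr w)) (hHr w hw)).1
    have e2 := (wder_mul (hSr w hw) (hhr w)).1
    simp only [Pi.mul_def] at e1 e2
    rw [e1, e2, (hwS w hw).1, (hwH w hw).1]
    simp [zero_mul, mul_assoc]
  -- differentiability of the eventual formula at z
  have hG1d : DifferentiableAt ℝ (fun u => star (H u) * wder h u * H u) z :=
    ((hSr z hz).mul hwhd.1).mul (hHr z hz)
  have hG2d : DifferentiableAt ℝ (fun u => star (H u) * h u * deriv H u) z :=
    ((hSr z hz).mul (hhr z)).mul hDr
  have hGd : DifferentiableAt ℝ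
      (fun u => star (H u) * wder h u * H u + star (H u) * h u * deriv H u) z := by
    have := hG1d.add hG2d
    exact this
  -- reduce scalar statement to operator statement
  have hfun : (fun w : ℂ => (inner ℂ ((ContinuousLinearMap.adjoint (H w) * h w * H w) v) v : ℂ))
      = fun w => phiR v (star (H w) * h w * H w) := by
    funext w
    rw [phiR_apply, ← ContinuousLinearMap.star_eq_adjoint]
  rw [hfun]
  have hev1 : wderBar (fun w => phiR v (star (H w) * h w * H w)) =ᶠ[nhds z]
      (fun w => phiR v (wder (fun u => star (H u) * h u * H u) w)) := by
    filter_upwards [hΩz] with w hw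
    exact (wder_comp_conj (phiR v) (phiR_I v) (hfr w hw)).2
  rw [wder_congr hev1]
  have hdiffwf : DifferentiableAt ℝ (wder (fun u => star (H u) * h u * H u)) z :=
    (Filter.EventuallyEq.differentiableAt_iff hGev).mpr hGd
  rw [(wder_comp_conj (phiR v) (phiR_I v) hdiffwf).1]
  rw [wderBar_congr hGev]
  -- compute the second-order operator derivative
  have hDholo := wder_of_holo (hder z hz).differentiableAt
  have key1 : wderBar (fun u => star (H u) * wder h u * H u + star (H u) * h u * deriv H u) z
      = (star (deriv H z) * wder h z + star (H z) * wder (wderBar h) z) * H z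
        + (star (deriv H z) * h z + star (H z) * wderBar h z) * deriv H z := by
    have e0 := (wder_add hG1d hG2d).2
    have e1 := (wder_mul ((hSr z hz).mul hwhd.1) (hHr z hz)).2
    have e2 := (wder_mul (hSr z hz) hwhd.1).2
    have e3 := (wder_mul ((hSr z hz).mul (hhr z)) hDr).2
    have e4 := (wder_mul (hSr z hz) (hhr z)).2
    simp only [Pi.mul_def] at e0 e1 e2 e3 e4
    rw [e0, e1, e2, e3, e4, (hwS z hz).2, (hwH z hz).2, hDholo.2,
      wder_wderBar_symm hh2 z]
    simp [mul_zero, add_zero]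
  rw [key1]
  -- now the operator algebra
  have hq : IsUnit (H z * star (H z)) := (hHinv z hz).mul (hHinv z hz).star
  set p := Ring.inverse (H z * star (H z)) with hpdef
  have hpq : p * (H z * star (H z)) = 1 := Ring.inverse_mul_cancel _ hq
  have hqp : (H z * star (H z)) * p = 1 := Ring.mul_inverse_cancel _ hq
  obtain ⟨uh, huh⟩ := hHinv z hz
  obtain ⟨us, hus⟩ := (hHinv z hz).star
  have hqu : H z * star (H z) = ((uh * us : (V →L[ℂ] V)ˣ) : V →L[ℂ] V) := by
    rw [Units.val_mul, huh, hus]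
  have hpval : p = ((us⁻¹ * uh⁻¹ : (V →L[ℂ] V)ˣ) : V →L[ℂ] V) := by
    rw [hpdef, hqu, Ring.inverse_unit, mul_inv_rev]
  have hsp : star (H z) * p * H z = 1 := by
    rw [hpval, ← hus, ← huh, Units.val_mul]
    rw [← mul_assoc]
    rw [show ((us : V →L[ℂ] V)) * ((us⁻¹ : (V →L[ℂ] V)ˣ) : V →L[ℂ] V) = 1 from Units.mul_inv us]
    rw [one_mul, Units.inv_mul]
  have r1 : ∀ x : V →L[ℂ] V, star (H z) * (p * (H z * x)) = x := fun x => by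
    rw [← mul_assoc, ← mul_assoc, hsp, one_mul]
  have r2 : ∀ x : V →L[ℂ] V, p * (H z * (star (H z) * x)) = x := fun x => by
    rw [← mul_assoc, ← mul_assoc, mul_assoc p (H z) (star (H z)), hpq, one_mul]
  have r3 : ∀ x : V →L[ℂ] V, H z * (star (H z) * (p * x)) = x := fun x => by
    rw [← mul_assoc, ← mul_assoc, hqp, one_mul]
  have r4 : star (H z) * (p * H z) = 1 := by rw [← mul_assoc, hsp]
  -- values of P's Wirtinger derivatives
  have hPfun : P = fun w => Ring.inverse (H w * star (H w)) := funext fun w => by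
    rw [hP w, ContinuousLinearMap.star_eq_adjoint]
  have hQd : DifferentiableAt ℝ (fun u => H u * star (H u)) z := by
    have := (hHr z hz).mul (hSr z hz)
    exact this
  have hQw := wder_mul (hHr z hz) (hSr z hz)
  have hQw1 := hQw.1
  have hQw2 := hQw.2
  rw [(hwH z hz).1, (hwS z hz).1] at hQw1
  rw [(hwH z hz).2, (hwS z hz).2] at hQw2
  have hQw1' : wder (fun u => H u * star (H u)) z = deriv H z * star (H z) := by
    rw [hQw1]; simp
  have hQw2' : wderBar (fun u => H u * star (H u)) z = H z * star (deriv H z) := by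
    rw [hQw2]; simp
  have hPinv := wder_ring_inverse hQd hq
  have hwP : wder P z = -(p * (deriv H z * star (H z)) * p) := by
    rw [hPfun]
    rw [hPinv.1, hQw1']
  have hwbP : wderBar P z = -(p * (H z * star (deriv H z)) * p) := by
    rw [hPfun]
    rw [hPinv.2, hQw2']
  have hRi : Ring.inverse (P z) = H z * star (H z) := by
    rw [hPfun]
    show Ring.inverse (Ring.inverse (H z * star (H z))) = H z * star (H z)
    rw [hqu, Ring.inverse_unit, Ring.inverse_unit, inv_inv]
  -- final identity
  have key2 : star (H z) * Lh z * H z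
      = (star (deriv H z) * wder h z + star (H z) * wder (wderBar h) z) * H z
        + (star (deriv H z) * h z + star (H z) * wderBar h z) * deriv H z := by
    rw [hLh z, hwP, hwbP, hRi]
    simp only [sub_eq_add_neg, neg_mul, mul_neg, neg_neg, mul_add, add_mul, mul_assoc,
      r1, r2, r3, r4, mul_one, one_mul]
    abel
  rw [← key2, ContinuousLinearMap.star_eq_adjoint]
  rfl
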